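/- Let μ, λ ∈ ℝ with μ·sin(λ) ≠ 0, and let θ₀ > 0, θ ≥ 0. If the pair (θ₀, θ) satisfies the equation θ₀·μ·sin(λ)·cos*(θ) = (θ₀²·μ·cos(λ) + 1/(μ·θ₀·sin(λ)))·sin*(θ)/θ (where cos*, sin* denote either both the trigonometric or both the hyperbolic functions, and sin*(θ)/θ := 1 if θ = 0), then sin*(θ) ≠ 0 if θ ≠ 0, and the equation is equivalent to θ·cot*(θ) = 1/(μ²θ₀²sin²(λ)) + θ₀·cot(λ). -/

import Mathlib

/-- The bifurcation condition (Lemma 3.5): if `(θ₀, θ)` satisfies the dispersion-type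
equation `θ₀ μ sin λ · cos*(θ) = (θ₀² μ cos λ + 1/(μ θ₀ sin λ)) · sin*(θ)/θ`
(where `(cos*, sin*)` is either `(cos, sin)` or `(cosh, sinh)`, and `sin*(θ)/θ := 1` at
`θ = 0`), then `sin*(θ) ≠ 0` whenever `θ ≠ 0`, and the equation is equivalent to
`θ·cot*(θ) = 1/(μ²θ₀²sin²λ) + θ₀·cot(λ)` (with `θ·cot*(θ) := 1` at `θ = 0`). -/
theorem bifurcation_condition (μ lam θ₀ θ : ℝ) (cs sn : ℝ → ℝ)
    (hstar : (cs = Real.cos ∧ sn = Real.sin) ∨ (cs = Real.cosh ∧ sn = Real.sinh))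
    (hmuls : μ * Real.sin lam ≠ 0) (hθ₀ : 0 < θ₀) (hθ : 0 ≤ θ)
    (heq : θ₀ * μ * Real.sin lam * cs θ =
      (θ₀ ^ 2 * μ * Real.cos lam + 1 / (μ * θ₀ * Real.sin lam)) *
        (if θ = 0 then 1 else sn θ / θ)) :
    (θ ≠ 0 → sn θ ≠ 0) ∧
    (if θ = 0 then (1 : ℝ) else θ * (cs θ / sn θ)) =
      1 / (μ ^ 2 * θ₀ ^ 2 * Real.sin lam ^ 2) + θ₀ * (Real.cos lam / Real.sin lam) := by
  have hm : μ ≠ 0 := fun h => hmuls (by simp [h])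
  have hs : Real.sin lam ≠ 0 := fun h => hmuls (by simp [h])
  have hθ₀' : θ₀ ≠ 0 := ne_of_gt hθ₀
  have hsn : θ ≠ 0 → sn θ ≠ 0 := by
    intro hθne hsn0
    rw [if_neg hθne, hsn0, zero_div, mul_zero] at heq
    rcases hstar with ⟨hc, hsn'⟩ | ⟨hc, hsn'⟩
    · rw [hsn'] at hsn0
      rw [hc] at heq
      rcases mul_eq_zero.mp heq with h | h
      · rcases mul_eq_zero.mp h with h' | h'
        · exact hθ₀' (by rcases mul_eq_zero.mp h' with h'' | h'' <;> [exact h''; exact absurd h'' hm])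
        · exact hs h'
      · have := Real.sin_sq_add_cos_sq θ
        nlinarith
    · rw [hsn'] at hsn0
      exact hθne (Real.sinh_eq_zero.mp hsn0)
  refine ⟨hsn, ?_⟩
  by_cases h0 : θ = 0
  · rw [if_pos h0] at heq ⊢
    have hcs : cs θ = 1 := by rcases hstar with ⟨hc, _⟩ | ⟨hc, _⟩ <;> simp [hc, h0]
    rw [hcs] at heq
    field_simp at heq ⊢
    linear_combination heq
  · rw [if_neg h0] at heq ⊢
    have hs0 := hsn h0
    field_simp at heq ⊢
    linear_combination heq
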